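/- For every m ≥ 2, the determinant of the 2(m−1) × 2(m−1) Sylvester-Pascal matrix S_m equals [(m−1)!]^m. -/

import Mathlib

/-- `a_i = C(m−1,i)·i!` (with `a_0 = 1`). -/
def pascalA (m i : ℕ) : ℕ := Nat.choose (m - 1) i * i.factorial

/-- `b_i = C(m−1,i)·(i+1)!` (with `b_0 = 1`). -/
def pascalB (m i : ℕ) : ℕ := Nat.choose (m - 1) i * (i + 1).factorial

/-- The 2(m−1) × 2(m−1) Sylvester-Pascal matrix: its first m−1 rows are shifted copies
of (1, a₁, …, a_{m−1}) and its last m−1 rows are shifted copies of (1, b₁, …, b_{m−1}),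
row k having its block start at column k. -/
def sylvesterPascal (m : ℕ) : Matrix (Fin (2 * (m - 1))) (Fin (2 * (m - 1))) ℝ :=
  Matrix.of fun i j =>
    if (i : ℕ) < m - 1 then
      (if (i : ℕ) ≤ (j : ℕ) ∧ (j : ℕ) ≤ (i : ℕ) + (m - 1) then
        (pascalA m ((j : ℕ) - (i : ℕ)) : ℝ) else 0)
    else
      (if (i : ℕ) - (m - 1) ≤ (j : ℕ) ∧ (j : ℕ) ≤ (i : ℕ) - (m - 1) + (m - 1) then
        (pascalB m ((j : ℕ) - ((i : ℕ) - (m - 1))) : ℝ) else 0)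

namespace SylPas

/-- real coefficient a -/
noncomputable def aa (p t : ℕ) : ℝ := (pascalA (p + 2) t : ℝ)
/-- real coefficient b -/
noncomputable def bb (p t : ℕ) : ℝ := (pascalB (p + 2) t : ℝ)

lemma aa_zero (p : ℕ) : aa p 0 = 1 := by simp [aa, pascalA]

lemma aa_top (p : ℕ) : aa p (p + 1) = ((p+1).factorial : ℝ) := by
  simp [aa, pascalA, Nat.choose_self]

lemma aa_big (p : ℕ) : aa p (p + 2) = 0 := by
  simp [aa, pascalA, Nat.choose_eq_zero_of_lt (by omega : p + 1 < p + 2)]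

lemma aa_top_pos (p : ℕ) : 0 < aa p (p + 1) := by
  rw [aa_top]; positivity

/-- the key identity: bb d + aa (d+1) = (p+2) * aa d -/
lemma key (p d : ℕ) : bb p d + aa p (d + 1) = (p + 2 : ℝ) * aa p d := by
  have hN : pascalB (p+2) d + pascalA (p+2) (d+1) = (p+2) * pascalA (p+2) d := by
    show Nat.choose (p+2-1) d * (d+1).factorial + Nat.choose (p+2-1) (d+1) * (d+1).factorial
        = (p+2) * (Nat.choose (p+2-1) d * d.factorial)
    have h1 : p + 2 - 1 = p + 1 := rfl
    rw [h1]
    have h2 : Nat.choose (p+1) d * (d+1).factorial + Nat.choose (p+1) (d+1) * (d+1).factorial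
        = Nat.choose (p+2) (d+1) * (d+1).factorial := by
      rw [Nat.choose_succ_succ (p+1) d]; ring
    rw [h2, Nat.factorial_succ]
    have h3 : (p+2) * Nat.choose (p+1) d = Nat.choose (p+2) (d+1) * (d+1) := by
      simpa using Nat.add_one_mul_choose_eq (p+1) d
    calc Nat.choose (p+2) (d+1) * ((d+1) * d.factorial)
        = (Nat.choose (p+2) (d+1) * (d+1)) * d.factorial := by ring
      _ = ((p+2) * Nat.choose (p+1) d) * d.factorial := by rw [← h3]
      _ = (p+2) * (Nat.choose (p+1) d * d.factorial) := by ring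
  have := congrArg (fun x : ℕ => (x : ℝ)) hN
  push_cast at this
  simpa [aa, bb] using this

/-- sum of a delta function over `Fin N` -/
lemma sum_ite_val {N : ℕ} (c : ℕ) (v : Fin N → ℝ) :
    (∑ t : Fin N, if (t : ℕ) = c then v t else 0) = if h : c < N then v ⟨c, h⟩ else 0 := by
  split
  · next h =>
    have : (∑ t : Fin N, if (t : ℕ) = c then v t else 0)
        = ∑ t : Fin N, if t = (⟨c, h⟩ : Fin N) then v t else 0 := by
      apply Finset.sum_congr rfl
      intro t _
      congr 1
      simp [Fin.ext_iff]
    rw [this, Finset.sum_ite_eq' Finset.univ (⟨c, h⟩ : Fin N) v]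
    simp
  · next h =>
    apply Finset.sum_eq_zero
    intro t _
    rw [if_neg]
    have := t.isLt
    omega

/-- the Sylvester-Pascal matrix with size in normal form -/
noncomputable def SS (p : ℕ) : Matrix (Fin (2*p+2)) (Fin (2*p+2)) ℝ := fun i j =>
  if (i : ℕ) < p + 1 then
    (if (i : ℕ) ≤ (j : ℕ) ∧ (j : ℕ) ≤ (i : ℕ) + (p + 1) then aa p ((j : ℕ) - (i : ℕ)) else 0)
  else
    (if (i : ℕ) - (p + 1) ≤ (j : ℕ) ∧ (j : ℕ) ≤ (i : ℕ) - (p + 1) + (p + 1) then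
      bb p ((j : ℕ) - ((i : ℕ) - (p + 1))) else 0)

noncomputable def E1a (p : ℕ) : Matrix (Fin (2*p+2)) (Fin (2*p+2)) ℝ := fun i j =>
  (if j = i then 1 else 0)
  + (if p + 1 ≤ (i : ℕ) ∧ (j : ℕ) = (i : ℕ) - (p + 1) then -(p + 2 : ℝ) else 0)
  + (if p + 2 ≤ (i : ℕ) ∧ (j : ℕ) + 1 = (i : ℕ) - (p + 1) then 1 else 0)

noncomputable def S1 (p : ℕ) : Matrix (Fin (2*p+2)) (Fin (2*p+2)) ℝ := fun i j =>
  if (i : ℕ) < p + 1 then SS p i j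
  else if (i : ℕ) = p + 1 then (if (j : ℕ) < p + 1 then -(aa p ((j : ℕ) + 1)) else 0)
  else (if (j : ℕ) + (p + 2) = (i : ℕ) then 1 else 0)

noncomputable def E1b (p : ℕ) : Matrix (Fin (2*p+2)) (Fin (2*p+2)) ℝ := fun i j =>
  (if j = i then 1 else 0)
  + (if (i : ℕ) = p + 1 ∧ p + 1 < (j : ℕ) then aa p ((j : ℕ) - (p + 1)) else 0)

noncomputable def S2 (p : ℕ) : Matrix (Fin (2*p+2)) (Fin (2*p+2)) ℝ := fun i j =>
  if (i : ℕ) = p + 1 then (if (j : ℕ) = p then -(aa p (p + 1)) else 0)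
  else S1 p i j

noncomputable def E2 (p : ℕ) : Matrix (Fin (2*p+2)) (Fin (2*p+2)) ℝ := fun i j =>
  (if j = i then 1 else 0)
  + (if (i : ℕ) < p + 1 ∧ (j : ℕ) = p + 1 then aa p (p - (i : ℕ)) / aa p (p + 1) else 0)
  + (if (i : ℕ) + p + 2 ≤ (j : ℕ) then -(aa p ((j : ℕ) - (p + 2) - (i : ℕ))) else 0)

noncomputable def TT (p : ℕ) : Matrix (Fin (2*p+2)) (Fin (2*p+2)) ℝ := fun i j =>
  if (i : ℕ) < p + 1 then
    (if p + 1 ≤ (j : ℕ) ∧ (j : ℕ) ≤ (i : ℕ) + (p + 1) then aa p ((j : ℕ) - (i : ℕ)) else 0)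
  else S2 p i j

theorem mul1 (p : ℕ) : E1a p * SS p = S1 p := by
  ext i j
  have hiN := i.isLt; have hjN := j.isLt
  rw [Matrix.mul_apply]
  simp only [E1a, add_mul, Finset.sum_add_distrib]
  have h1 : (∑ t : Fin (2*p+2), (if t = i then (1:ℝ) else 0) * SS p t j) = SS p i j := by
    have e : ∀ t : Fin (2*p+2), (if t = i then (1:ℝ) else 0) * SS p t j
        = (if (t : ℕ) = (i : ℕ) then SS p t j else 0) := by
      intro t
      by_cases h : t = i
      · rw [if_pos h, if_pos (by rw [h]), one_mul]
      · rw [if_neg h, if_neg (fun hh => h (Fin.ext hh)), zero_mul]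
    rw [Finset.sum_congr rfl fun t _ => e t, sum_ite_val, dif_pos i.isLt]
  have h2 : (∑ t : Fin (2*p+2),
        (if p+1 ≤ (i:ℕ) ∧ (t:ℕ) = (i:ℕ)-(p+1) then -(p+2:ℝ) else 0) * SS p t j)
      = if p+1 ≤ (i:ℕ) then -(p+2:ℝ) * SS p ⟨(i:ℕ)-(p+1), by omega⟩ j else 0 := by
    by_cases hP : p+1 ≤ (i:ℕ)
    · rw [if_pos hP]
      have e : ∀ t : Fin (2*p+2),
          (if p+1 ≤ (i:ℕ) ∧ (t:ℕ) = (i:ℕ)-(p+1) then -(p+2:ℝ) else 0) * SS p t j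
          = (if (t:ℕ) = (i:ℕ)-(p+1) then -(p+2:ℝ) * SS p t j else 0) := by
        intro t
        by_cases h : (t:ℕ) = (i:ℕ)-(p+1)
        · rw [if_pos ⟨hP, h⟩, if_pos h]
        · rw [if_neg (fun hh => h hh.2), if_neg h, zero_mul]
      rw [Finset.sum_congr rfl fun t _ => e t, sum_ite_val, dif_pos (by omega : (i:ℕ)-(p+1) < 2*p+2)]
    · rw [if_neg hP]
      apply Finset.sum_eq_zero; intro t _
      rw [if_neg (fun hh => hP hh.1), zero_mul]
  have h3 : (∑ t : Fin (2*p+2),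
        (if p+2 ≤ (i:ℕ) ∧ (t:ℕ) + 1 = (i:ℕ)-(p+1) then (1:ℝ) else 0) * SS p t j)
      = if p+2 ≤ (i:ℕ) then SS p ⟨(i:ℕ)-(p+2), by omega⟩ j else 0 := by
    by_cases hP : p+2 ≤ (i:ℕ)
    · rw [if_pos hP]
      have e : ∀ t : Fin (2*p+2),
          (if p+2 ≤ (i:ℕ) ∧ (t:ℕ) + 1 = (i:ℕ)-(p+1) then (1:ℝ) else 0) * SS p t j
          = (if (t:ℕ) = (i:ℕ)-(p+2) then SS p t j else 0) := by
        intro t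
        by_cases h : (t:ℕ) = (i:ℕ)-(p+2)
        · rw [if_pos ⟨hP, by omega⟩, if_pos h, one_mul]
        · rw [if_neg (fun hh => h (by omega)), if_neg h, zero_mul]
      rw [Finset.sum_congr rfl fun t _ => e t, sum_ite_val, dif_pos (by omega : (i:ℕ)-(p+2) < 2*p+2)]
    · rw [if_neg hP]
      apply Finset.sum_eq_zero; intro t _
      rw [if_neg (fun hh => hP hh.1), zero_mul]
  rw [h1, h2, h3]
  by_cases hi1 : (i:ℕ) < p + 1
  · rw [if_neg (by omega), if_neg (by omega), add_zero, add_zero, S1, if_pos hi1]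
  by_cases hi2 : (i:ℕ) = p + 1
  · rw [if_pos (by omega), if_neg (by omega), add_zero]
    simp only [SS, S1, show (i:ℕ)-(p+1) = 0 from by omega]
    rw [if_neg hi1, if_neg hi1, if_pos hi2, if_pos (by omega : 0 < p + 1)]
    by_cases hj1 : (j:ℕ) ≤ p
    · rw [if_pos (by omega : (0:ℕ) ≤ (j:ℕ) ∧ (j:ℕ) ≤ 0 + (p+1)),
          if_pos (by omega : (0:ℕ) ≤ (j:ℕ) ∧ (j:ℕ) ≤ 0 + (p+1)), if_pos (by omega : (j:ℕ) < p + 1)]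
      rw [Nat.sub_zero]
      have := key p (j:ℕ); linarith
    by_cases hj2 : (j:ℕ) = p + 1
    · rw [if_pos (by omega : (0:ℕ) ≤ (j:ℕ) ∧ (j:ℕ) ≤ 0 + (p+1)),
          if_pos (by omega : (0:ℕ) ≤ (j:ℕ) ∧ (j:ℕ) ≤ 0 + (p+1)), if_neg (by omega : ¬ ((j:ℕ) < p + 1))]
      rw [Nat.sub_zero, hj2]
      have := key p (p+1); have h0 := aa_big p; linarith
    · rw [if_neg (by omega : ¬ ((0:ℕ) ≤ (j:ℕ) ∧ (j:ℕ) ≤ 0 + (p+1))),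
          if_neg (by omega : ¬ ((0:ℕ) ≤ (j:ℕ) ∧ (j:ℕ) ≤ 0 + (p+1))),
          if_neg (by omega : ¬ ((j:ℕ) < p + 1))]
      ring
  · have hP : p + 2 ≤ (i:ℕ) := by omega
    rw [if_pos (by omega : p + 1 ≤ (i:ℕ)), if_pos hP]
    simp only [SS, S1]
    rw [if_neg hi1, if_neg hi1, if_neg hi2,
        if_pos (by omega : (i:ℕ) - (p+1) < p + 1), if_pos (by omega : (i:ℕ) - (p+2) < p + 1)]
    by_cases hc2 : (j:ℕ) + (p + 2) = (i:ℕ)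
    · rw [if_neg (by omega : ¬ ((i:ℕ)-(p+1) ≤ (j:ℕ) ∧ (j:ℕ) ≤ (i:ℕ)-(p+1) + (p+1))),
          if_neg (by omega : ¬ ((i:ℕ)-(p+1) ≤ (j:ℕ) ∧ (j:ℕ) ≤ (i:ℕ)-(p+1) + (p+1))),
          if_pos (by omega : (i:ℕ)-(p+2) ≤ (j:ℕ) ∧ (j:ℕ) ≤ (i:ℕ)-(p+2) + (p+1)),
          if_pos hc2]
      rw [show (j:ℕ) - ((i:ℕ)-(p+2)) = 0 from by omega, aa_zero]; ring
    by_cases hc3 : (i:ℕ)-(p+1) ≤ (j:ℕ) ∧ (j:ℕ) + 1 ≤ (i:ℕ)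
    · rw [if_pos (by omega : (i:ℕ)-(p+1) ≤ (j:ℕ) ∧ (j:ℕ) ≤ (i:ℕ)-(p+1) + (p+1)),
          if_pos (by omega : (i:ℕ)-(p+1) ≤ (j:ℕ) ∧ (j:ℕ) ≤ (i:ℕ)-(p+1) + (p+1)),
          if_pos (by omega : (i:ℕ)-(p+2) ≤ (j:ℕ) ∧ (j:ℕ) ≤ (i:ℕ)-(p+2) + (p+1)),
          if_neg hc2]
      rw [show (j:ℕ) - ((i:ℕ)-(p+2)) = ((j:ℕ) - ((i:ℕ)-(p+1))) + 1 from by omega]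
      have := key p ((j:ℕ) - ((i:ℕ)-(p+1))); linarith
    by_cases hc4 : (j:ℕ) = (i:ℕ)
    · rw [if_pos (by omega : (i:ℕ)-(p+1) ≤ (j:ℕ) ∧ (j:ℕ) ≤ (i:ℕ)-(p+1) + (p+1)),
          if_pos (by omega : (i:ℕ)-(p+1) ≤ (j:ℕ) ∧ (j:ℕ) ≤ (i:ℕ)-(p+1) + (p+1)),
          if_neg (by omega : ¬ ((i:ℕ)-(p+2) ≤ (j:ℕ) ∧ (j:ℕ) ≤ (i:ℕ)-(p+2) + (p+1))),
          if_neg hc2]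
      rw [show (j:ℕ) - ((i:ℕ)-(p+1)) = p + 1 from by omega]
      have := key p (p+1); have h0 := aa_big p; linarith
    · rw [if_neg (by omega : ¬ ((i:ℕ)-(p+1) ≤ (j:ℕ) ∧ (j:ℕ) ≤ (i:ℕ)-(p+1) + (p+1))),
          if_neg (by omega : ¬ ((i:ℕ)-(p+1) ≤ (j:ℕ) ∧ (j:ℕ) ≤ (i:ℕ)-(p+1) + (p+1))),
          if_neg (by omega : ¬ ((i:ℕ)-(p+2) ≤ (j:ℕ) ∧ (j:ℕ) ≤ (i:ℕ)-(p+2) + (p+1))),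
          if_neg hc2]
      ring

lemma sum_delta_row {N : ℕ} (i : Fin N) (v : Fin N → ℝ) :
    (∑ t : Fin N, (if t = i then (1:ℝ) else 0) * v t) = v i := by
  have e : ∀ t : Fin N, (if t = i then (1:ℝ) else 0) * v t
      = (if (t : ℕ) = (i : ℕ) then v t else 0) := by
    intro t
    by_cases h : t = i
    · rw [if_pos h, if_pos (by rw [h]), one_mul]
    · rw [if_neg h, if_neg (fun hh => h (Fin.ext hh)), zero_mul]
  rw [Finset.sum_congr rfl fun t _ => e t, sum_ite_val, dif_pos i.isLt, Fin.eta]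

theorem mul2 (p : ℕ) : E1b p * S1 p = S2 p := by
  ext i j
  have hjN := j.isLt; have hiN := i.isLt
  rw [Matrix.mul_apply]
  by_cases hi : (i:ℕ) = p + 1
  · simp only [E1b, add_mul, Finset.sum_add_distrib]
    rw [sum_delta_row]
    have h2 : (∑ t : Fin (2*p+2),
          (if (i:ℕ) = p + 1 ∧ p + 1 < (t:ℕ) then aa p ((t:ℕ) - (p+1)) else 0) * S1 p t j)
        = if (j:ℕ) < p then aa p ((j:ℕ) + 1) else 0 := by
      by_cases hj : (j:ℕ) < p
      · rw [if_pos hj]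
        have e : ∀ t : Fin (2*p+2),
            (if (i:ℕ) = p + 1 ∧ p + 1 < (t:ℕ) then aa p ((t:ℕ) - (p+1)) else 0) * S1 p t j
            = (if (t:ℕ) = (j:ℕ) + (p + 2) then aa p ((j:ℕ) + 1) else 0) := by
          intro t
          by_cases htj : (t:ℕ) = (j:ℕ) + (p + 2)
          · rw [if_pos ⟨hi, by omega⟩, if_pos htj]
            simp only [S1]
            rw [if_neg (by omega), if_neg (by omega), if_pos (by omega), mul_one,
                show (t:ℕ) - (p+1) = (j:ℕ) + 1 from by omega]
          · rw [if_neg htj]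
            by_cases hout : p + 1 < (t:ℕ)
            · rw [if_pos ⟨hi, hout⟩]
              simp only [S1]
              rw [if_neg (by omega), if_neg (by omega), if_neg (by omega), mul_zero]
            · rw [if_neg (by omega), zero_mul]
        rw [Finset.sum_congr rfl fun t _ => e t, sum_ite_val, dif_pos (by omega)]
      · rw [if_neg hj]
        apply Finset.sum_eq_zero; intro t _
        by_cases hout : p + 1 < (t:ℕ)
        · rw [if_pos ⟨hi, hout⟩]
          simp only [S1]
          rw [if_neg (by omega), if_neg (by omega), if_neg (by omega), mul_zero]
        · rw [if_neg (by omega), zero_mul]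
    rw [h2]
    simp only [S1, S2]
    rw [if_neg (by omega), if_pos hi, if_pos hi]
    by_cases hj1 : (j:ℕ) < p
    · rw [if_pos (by omega), if_pos hj1, if_neg (by omega)]; ring
    by_cases hj2 : (j:ℕ) = p
    · rw [if_pos (by omega), if_neg hj1, if_pos hj2, hj2, add_zero]
    · rw [if_neg (by omega), if_neg hj1, if_neg hj2, add_zero]
  · have e : ∀ t : Fin (2*p+2), E1b p i t * S1 p t j
        = (if t = i then (1:ℝ) else 0) * S1 p t j := by
      intro t
      simp only [E1b]
      rw [if_neg (show ¬((i:ℕ) = p + 1 ∧ p + 1 < (t:ℕ)) from fun hh => hi hh.1), add_zero]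
    rw [Finset.sum_congr rfl fun t _ => e t, sum_delta_row, S2, if_neg hi]

theorem mul3 (p : ℕ) : E2 p * S2 p = TT p := by
  ext i j
  have hiN := i.isLt; have hjN := j.isLt
  rw [Matrix.mul_apply]
  by_cases hi : (i:ℕ) < p + 1
  · simp only [E2, add_mul, Finset.sum_add_distrib]
    rw [sum_delta_row]
    have h2 : (∑ t : Fin (2*p+2),
          (if (i:ℕ) < p + 1 ∧ (t:ℕ) = p + 1 then aa p (p - (i:ℕ)) / aa p (p+1) else 0) * S2 p t j)
        = if (j:ℕ) = p then -(aa p (p - (i:ℕ))) else 0 := by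
      have e : ∀ t : Fin (2*p+2),
          (if (i:ℕ) < p + 1 ∧ (t:ℕ) = p + 1 then aa p (p - (i:ℕ)) / aa p (p+1) else 0) * S2 p t j
          = (if (t:ℕ) = p + 1 then (aa p (p - (i:ℕ)) / aa p (p+1)) * S2 p t j else 0) := by
        intro t
        by_cases ht : (t:ℕ) = p + 1
        · rw [if_pos ⟨hi, ht⟩, if_pos ht]
        · rw [if_neg (show ¬((i:ℕ) < p + 1 ∧ (t:ℕ) = p + 1) from fun hh => ht hh.2),
              if_neg ht, zero_mul]
      rw [Finset.sum_congr rfl fun t _ => e t, sum_ite_val, dif_pos (by omega : p + 1 < 2*p+2)]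
      simp only [S2, if_true]
      by_cases hj : (j:ℕ) = p
      · rw [if_pos hj, if_pos hj]
        have hne : aa p (p+1) ≠ 0 := ne_of_gt (aa_top_pos p)
        field_simp
      · rw [if_neg hj, if_neg hj, mul_zero]
    have h3 : (∑ t : Fin (2*p+2),
          (if (i:ℕ) + p + 2 ≤ (t:ℕ) then -(aa p ((t:ℕ) - (p+2) - (i:ℕ))) else 0) * S2 p t j)
        = if (i:ℕ) ≤ (j:ℕ) ∧ (j:ℕ) < p then -(aa p ((j:ℕ) - (i:ℕ))) else 0 := by
      by_cases hcond : (i:ℕ) ≤ (j:ℕ) ∧ (j:ℕ) < p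
      · rw [if_pos hcond]
        have e : ∀ t : Fin (2*p+2),
            (if (i:ℕ) + p + 2 ≤ (t:ℕ) then -(aa p ((t:ℕ) - (p+2) - (i:ℕ))) else 0) * S2 p t j
            = (if (t:ℕ) = (j:ℕ) + (p + 2) then -(aa p ((j:ℕ) - (i:ℕ))) else 0) := by
          intro t
          by_cases htj : (t:ℕ) = (j:ℕ) + (p + 2)
          · rw [if_pos (by omega : (i:ℕ) + p + 2 ≤ (t:ℕ)), if_pos htj]
            simp only [S2, S1]
            rw [if_neg (by omega), if_neg (by omega), if_neg (by omega), if_pos (by omega),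
                mul_one, show (t:ℕ) - (p+2) - (i:ℕ) = (j:ℕ) - (i:ℕ) from by omega]
          · rw [if_neg htj]
            by_cases hout : (i:ℕ) + p + 2 ≤ (t:ℕ)
            · rw [if_pos hout]
              simp only [S2, S1]
              rw [if_neg (by omega), if_neg (by omega), if_neg (by omega), if_neg (by omega),
                  mul_zero]
            · rw [if_neg hout, zero_mul]
        rw [Finset.sum_congr rfl fun t _ => e t, sum_ite_val,
            dif_pos (by omega : (j:ℕ) + (p + 2) < 2*p+2)]
      · rw [if_neg hcond]
        apply Finset.sum_eq_zero; intro t _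
        have htN := t.isLt
        by_cases hout : (i:ℕ) + p + 2 ≤ (t:ℕ)
        · rw [if_pos hout]
          simp only [S2, S1]
          rw [if_neg (by omega), if_neg (by omega), if_neg (by omega), if_neg (by omega), mul_zero]
        · rw [if_neg hout, zero_mul]
    rw [h2, h3]
    simp only [S2, S1, SS, TT]
    rw [if_neg (by omega : ¬ (i:ℕ) = p + 1), if_pos hi, if_pos hi, if_pos hi]
    by_cases hj1 : (j:ℕ) < (i:ℕ)
    · rw [if_neg (by omega : ¬ ((i:ℕ) ≤ (j:ℕ) ∧ (j:ℕ) ≤ (i:ℕ) + (p+1))),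
          if_neg (by omega : ¬ (j:ℕ) = p),
          if_neg (by omega : ¬ ((i:ℕ) ≤ (j:ℕ) ∧ (j:ℕ) < p)),
          if_neg (by omega : ¬ (p + 1 ≤ (j:ℕ) ∧ (j:ℕ) ≤ (i:ℕ) + (p+1)))]
      ring
    by_cases hj2 : (j:ℕ) < p
    · rw [if_pos (by omega : (i:ℕ) ≤ (j:ℕ) ∧ (j:ℕ) ≤ (i:ℕ) + (p+1)),
          if_neg (by omega : ¬ (j:ℕ) = p),
          if_pos (by omega : (i:ℕ) ≤ (j:ℕ) ∧ (j:ℕ) < p),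
          if_neg (by omega : ¬ (p + 1 ≤ (j:ℕ) ∧ (j:ℕ) ≤ (i:ℕ) + (p+1)))]
      ring
    by_cases hj3 : (j:ℕ) = p
    · rw [if_pos (by omega : (i:ℕ) ≤ (j:ℕ) ∧ (j:ℕ) ≤ (i:ℕ) + (p+1)),
          if_pos hj3,
          if_neg (by omega : ¬ ((i:ℕ) ≤ (j:ℕ) ∧ (j:ℕ) < p)),
          if_neg (by omega : ¬ (p + 1 ≤ (j:ℕ) ∧ (j:ℕ) ≤ (i:ℕ) + (p+1))),
          show p - (i:ℕ) = (j:ℕ) - (i:ℕ) from by omega]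
      ring
    by_cases hj4 : (j:ℕ) ≤ (i:ℕ) + (p+1)
    · rw [if_pos (by omega : (i:ℕ) ≤ (j:ℕ) ∧ (j:ℕ) ≤ (i:ℕ) + (p+1)),
          if_neg (by omega : ¬ (j:ℕ) = p),
          if_neg (by omega : ¬ ((i:ℕ) ≤ (j:ℕ) ∧ (j:ℕ) < p)),
          if_pos (by omega : p + 1 ≤ (j:ℕ) ∧ (j:ℕ) ≤ (i:ℕ) + (p+1))]
      ring
    · rw [if_neg (by omega : ¬ ((i:ℕ) ≤ (j:ℕ) ∧ (j:ℕ) ≤ (i:ℕ) + (p+1))),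
          if_neg (by omega : ¬ (j:ℕ) = p),
          if_neg (by omega : ¬ ((i:ℕ) ≤ (j:ℕ) ∧ (j:ℕ) < p)),
          if_neg (by omega : ¬ (p + 1 ≤ (j:ℕ) ∧ (j:ℕ) ≤ (i:ℕ) + (p+1)))]
      ring
  · have e : ∀ t : Fin (2*p+2), E2 p i t * S2 p t j
        = (if t = i then (1:ℝ) else 0) * S2 p t j := by
      intro t
      have htN := t.isLt
      simp only [E2]
      rw [if_neg (show ¬((i:ℕ) < p + 1 ∧ (t:ℕ) = p + 1) from fun hh => hi hh.1),
          if_neg (by omega : ¬ ((i:ℕ) + p + 2 ≤ (t:ℕ))), add_zero, add_zero]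
    rw [Finset.sum_congr rfl fun t _ => e t, sum_delta_row, TT, if_neg hi]

lemma detE1a (p : ℕ) : (E1a p).det = 1 := by
  have h : (E1a p).BlockTriangular OrderDual.toDual := by
    intro i j hij
    have hlt : i < j := hij
    have hv : (i:ℕ) < (j:ℕ) := hlt
    simp only [E1a]
    rw [if_neg (Fin.ne_of_val_ne (by omega : (j:ℕ) ≠ (i:ℕ))),
        if_neg (by omega : ¬ (p + 1 ≤ (i:ℕ) ∧ (j:ℕ) = (i:ℕ) - (p+1))),
        if_neg (by omega : ¬ (p + 2 ≤ (i:ℕ) ∧ (j:ℕ) + 1 = (i:ℕ) - (p+1)))]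
    ring
  rw [Matrix.det_of_lowerTriangular (E1a p) h]
  apply Finset.prod_eq_one; intro i _
  simp only [E1a]
  rw [if_true, if_neg (by omega : ¬ (p + 1 ≤ (i:ℕ) ∧ (i:ℕ) = (i:ℕ) - (p+1))),
      if_neg (by omega : ¬ (p + 2 ≤ (i:ℕ) ∧ (i:ℕ) + 1 = (i:ℕ) - (p+1)))]
  ring
lemma detE1b (p : ℕ) : (E1b p).det = 1 := by
  have h : (E1b p).BlockTriangular id := by
    intro i j hij
    have hv : (j:ℕ) < (i:ℕ) := hij
    simp only [E1b]
    rw [if_neg (Fin.ne_of_val_ne (by omega : (j:ℕ) ≠ (i:ℕ))),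
        if_neg (by omega : ¬ ((i:ℕ) = p + 1 ∧ p + 1 < (j:ℕ)))]
    ring
  rw [Matrix.det_of_upperTriangular h]
  apply Finset.prod_eq_one; intro i _
  simp only [E1b]
  rw [if_true, if_neg (by omega : ¬ ((i:ℕ) = p + 1 ∧ p + 1 < (i:ℕ)))]
  ring
lemma detE2 (p : ℕ) : (E2 p).det = 1 := by
  have h : (E2 p).BlockTriangular id := by
    intro i j hij
    have hv : (j:ℕ) < (i:ℕ) := hij
    simp only [E2]
    rw [if_neg (Fin.ne_of_val_ne (by omega : (j:ℕ) ≠ (i:ℕ))),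
        if_neg (by omega : ¬ ((i:ℕ) < p + 1 ∧ (j:ℕ) = p + 1)),
        if_neg (by omega : ¬ ((i:ℕ) + p + 2 ≤ (j:ℕ)))]
    ring
  rw [Matrix.det_of_upperTriangular h]
  apply Finset.prod_eq_one; intro i _
  simp only [E2]
  rw [if_true, if_neg (by omega : ¬ ((i:ℕ) < p + 1 ∧ (i:ℕ) = p + 1)),
      if_neg (by omega : ¬ ((i:ℕ) + p + 2 ≤ (i:ℕ)))]
  ring

open Fin.NatCast in
lemma rot_pow (q k : ℕ) (x : Fin (q+1)) :
    ((finRotate (q+1))^k) x = x + (k : Fin (q+1)) := by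
  induction k generalizing x with
  | zero => simp
  | succ k ih =>
    rw [pow_succ, Equiv.Perm.mul_apply, finRotate_succ_apply, ih (x+1)]
    push_cast
    abel

open Fin.NatCast in
lemma rot_val (q k : ℕ) (x : Fin (q+1)) :
    (((finRotate (q+1))^k) x : ℕ) = ((x:ℕ) + k) % (q+1) := by
  rw [rot_pow, Fin.val_add, Fin.val_natCast]
  exact Nat.ModEq.add_left _ (Nat.mod_modEq k (q+1))

/-- the row permutation -/
def gPerm (p : ℕ) : Equiv.Perm (Fin (2*p+2)) :=
  (Fin.cycleRange (⟨p+1, by omega⟩ : Fin (2*p+2)))⁻¹ * (finRotate (2*p+2))^(p+2)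

set_option maxHeartbeats 1000000 in
lemma gPerm_apply (p : ℕ) (x : Fin (2*p+2)) :
    ((gPerm p) x : ℕ) =
      if (x:ℕ) < p then (x:ℕ) + p + 2 else if (x:ℕ) = p then p + 1 else (x:ℕ) - (p+1) := by
  have hx := x.isLt
  have hrot : (((finRotate (2*p+2))^(p+2)) x : ℕ) = ((x:ℕ) + (p+2)) % (2*p+2) :=
    rot_val (2*p+1) (p+2) x
  rw [gPerm, Equiv.Perm.mul_apply]
  by_cases h1 : (x:ℕ) < p
  · rw [if_pos h1]
    have hv : ((finRotate (2*p+2))^(p+2)) x = (⟨(x:ℕ)+p+2, by omega⟩ : Fin (2*p+2)) := by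
      apply Fin.ext
      rw [hrot]
      exact Nat.mod_eq_of_lt (by omega)
    rw [hv]
    have : (Fin.cycleRange (⟨p+1, by omega⟩ : Fin (2*p+2)))⁻¹ (⟨(x:ℕ)+p+2, by omega⟩ : Fin (2*p+2))
        = (⟨(x:ℕ)+p+2, by omega⟩ : Fin (2*p+2)) := by
      rw [Equiv.Perm.inv_eq_iff_eq]
      exact (Fin.cycleRange_of_gt (by simp [Fin.lt_def])).symm
    rw [this]
  by_cases h2 : (x:ℕ) = p
  · rw [if_neg h1, if_pos h2]
    have hv : ((finRotate (2*p+2))^(p+2)) x = (⟨0, by omega⟩ : Fin (2*p+2)) := by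
      apply Fin.ext
      rw [hrot, show (x:ℕ) + (p+2) = 2*p+2 from by omega]
      exact Nat.mod_self _
    rw [hv]
    have : (Fin.cycleRange (⟨p+1, by omega⟩ : Fin (2*p+2)))⁻¹ (⟨0, by omega⟩ : Fin (2*p+2))
        = (⟨p+1, by omega⟩ : Fin (2*p+2)) := by
      rw [Equiv.Perm.inv_eq_iff_eq]
      exact (Fin.cycleRange_of_eq rfl).symm
    rw [this]
  · rw [if_neg h1, if_neg h2]
    have hv : ((finRotate (2*p+2))^(p+2)) x = (⟨(x:ℕ)-p, by omega⟩ : Fin (2*p+2)) := by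
      apply Fin.ext
      rw [hrot, Nat.mod_eq_sub_mod (by omega),
          show (x:ℕ) + (p+2) - (2*p+2) = (x:ℕ) - p from by omega]
      exact Nat.mod_eq_of_lt (by omega)
    rw [hv]
    have : (Fin.cycleRange (⟨p+1, by omega⟩ : Fin (2*p+2)))⁻¹ (⟨(x:ℕ)-p, by omega⟩ : Fin (2*p+2))
        = (⟨(x:ℕ)-(p+1), by omega⟩ : Fin (2*p+2)) := by
      rw [Equiv.Perm.inv_eq_iff_eq]
      rw [Fin.cycleRange_of_lt (by simp [Fin.lt_def]; omega)]
      apply Fin.ext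
      simp only [Fin.val_add, Fin.val_one]
      rw [Nat.mod_eq_of_lt (by omega)]
      omega
    rw [this]

lemma sign_gPerm (p : ℕ) : Equiv.Perm.sign (gPerm p) = -1 := by
  rw [gPerm, map_mul, map_inv, map_pow, Fin.sign_cycleRange, sign_finRotate]
  have hval : ((⟨p+1, by omega⟩ : Fin (2*p+2)) : ℕ) = p + 1 := rfl
  rw [hval, ← inv_pow]
  have : ((-1 : ℤˣ))⁻¹ = -1 := by decide
  rw [this]
  have h2 : ((-1 : ℤˣ))^(2*p+2-1) = -1 := Odd.neg_one_pow ⟨p, by omega⟩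
  rw [h2]
  calc ((-1 : ℤˣ))^(p+1) * ((-1)^(p+2)) = (-1)^(2*p+3) := by rw [← pow_add]; ring_nf
    _ = -1 := Odd.neg_one_pow ⟨p+1, by ring⟩

lemma detT (p : ℕ) : (TT p).det = aa p (p+1) ^ (p+2) := by
  have hdet := Matrix.det_permute (gPerm p) (TT p)
  set U := (TT p).submatrix (gPerm p) id with hUdef
  have hUtri : U.BlockTriangular OrderDual.toDual := by
    intro i j hij
    have hlt : i < j := hij
    have hv : (i:ℕ) < (j:ℕ) := hlt
    have hiN := i.isLt; have hjN := j.isLt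
    have hgi := gPerm_apply p i
    rw [hUdef]
    simp only [Matrix.submatrix_apply, id_eq]
    by_cases h1 : (i:ℕ) < p
    · rw [if_pos h1] at hgi
      simp only [TT, S2, S1]
      rw [if_neg (by omega), if_neg (by omega), if_neg (by omega), if_neg (by omega),
          if_neg (by omega)]
    by_cases h2 : (i:ℕ) = p
    · rw [if_neg h1, if_pos h2] at hgi
      simp only [TT, S2]
      rw [if_neg (by omega), if_pos (by omega), if_neg (by omega)]
    · rw [if_neg h1, if_neg h2] at hgi
      simp only [TT]
      rw [if_pos (by omega), if_neg (by omega)]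
  have hUdiag : ∀ i : Fin (2*p+2), U i i
      = (if (i:ℕ) < p then 1 else if (i:ℕ) = p then -(aa p (p+1)) else aa p (p+1)) := by
    intro i
    have hiN := i.isLt
    have hgi := gPerm_apply p i
    rw [hUdef]
    simp only [Matrix.submatrix_apply, id_eq]
    by_cases h1 : (i:ℕ) < p
    · rw [if_pos h1] at hgi
      rw [if_pos h1]
      simp only [TT, S2, S1]
      rw [if_neg (by omega), if_neg (by omega), if_neg (by omega), if_neg (by omega),
          if_pos (by omega)]
    by_cases h2 : (i:ℕ) = p
    · rw [if_neg h1, if_pos h2] at hgi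
      rw [if_neg h1, if_pos h2]
      simp only [TT, S2]
      rw [if_neg (by omega), if_pos (by omega), if_pos (by omega)]
    · rw [if_neg h1, if_neg h2] at hgi
      rw [if_neg h1, if_neg h2]
      simp only [TT]
      rw [if_pos (by omega), if_pos (by omega : p + 1 ≤ (i:ℕ) ∧ (i:ℕ) ≤ ((gPerm p) i : ℕ) + (p+1)),
          show (i:ℕ) - ((gPerm p) i : ℕ) = p + 1 from by omega]
  have hUdet : U.det = -(aa p (p+1) ^ (p+2)) := by
    rw [Matrix.det_of_lowerTriangular U hUtri, Finset.prod_congr rfl (fun i _ => hUdiag i),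
        Fin.prod_univ_eq_prod_range
          (fun k => if k < p then (1:ℝ) else if k = p then -(aa p (p+1)) else aa p (p+1)) (2*p+2),
        show 2*p+2 = (p+1)+(p+1) from by ring, Finset.prod_range_add]
    have e1 : (∏ k ∈ Finset.range (p+1),
        (if k < p then (1:ℝ) else if k = p then -(aa p (p+1)) else aa p (p+1)))
        = -(aa p (p+1)) := by
      rw [Finset.prod_range_succ, if_neg (by omega), if_pos rfl,
          Finset.prod_eq_one (fun k hk => if_pos (Finset.mem_range.mp hk)), one_mul]
    have e2 : (∏ k ∈ Finset.range (p+1),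
        (if (p+1)+k < p then (1:ℝ) else if (p+1)+k = p then -(aa p (p+1)) else aa p (p+1)))
        = aa p (p+1) ^ (p+1) := by
      rw [Finset.prod_congr rfl (fun k _ => by rw [if_neg (by omega), if_neg (by omega)]),
          Finset.prod_const, Finset.card_range]
    rw [e1, e2]
    ring
  rw [hUdet, sign_gPerm] at hdet
  have : -(aa p (p+1) ^ (p+2)) = -(TT p).det := by
    rw [hdet]; push_cast; ring
  linarith

lemma detSS (p : ℕ) : (SS p).det = (((p+1).factorial : ℝ)) ^ (p+2) := by
  have h := congrArg Matrix.det (mul3 p)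
  rw [← mul2 p, ← mul1 p, Matrix.det_mul, Matrix.det_mul, Matrix.det_mul,
      detE2, detE1b, detE1a, detT, aa_top] at h
  simpa using h

end SylPas

/-- For every m ≥ 2, det S_m = [(m−1)!]^m. -/
theorem det_sylvester_pascal (m : ℕ) (hm : 2 ≤ m) :
    (sylvesterPascal m).det = (((m - 1).factorial : ℝ)) ^ m := by
  obtain ⟨p, rfl⟩ : ∃ p, m = p + 2 := ⟨m - 2, by omega⟩
  have hsz : 2 * p + 2 = 2 * (p + 2 - 1) := by omega
  rw [← Matrix.det_submatrix_equiv_self (finCongr hsz) (sylvesterPascal (p+2))]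
  have heq : (sylvesterPascal (p+2)).submatrix (finCongr hsz) (finCongr hsz) = SylPas.SS p := by
    ext i j
    have hei : ((finCongr hsz i : Fin (2*(p+2-1))) : ℕ) = (i:ℕ) := rfl
    have hej : ((finCongr hsz j : Fin (2*(p+2-1))) : ℕ) = (j:ℕ) := rfl
    simp only [Matrix.submatrix_apply, sylvesterPascal, SylPas.SS, SylPas.aa, SylPas.bb,
      Matrix.of_apply, hei, hej, show (p+2-1) = p+1 from rfl]
  rw [heq, SylPas.detSS]
  norm_num
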